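/- Let A_• be a connective (non-negatively graded) chain complex in an abelian category and let DK(A)_n = ⊕_{η:[n]↠[p]} A_p be the n-th term of the Dold–Kan simplicial object, with structure maps defined via epi-mono factorization (where the summand map corresponding to ρ = δ^p_p: [p−1] ↪ [p] is (−1)^p ∂_p, the one corresponding to ρ = id is the identity, and all others are 0). Let π_n : DK(A)_n → A_n denote the projection onto the summand indexed by η = id_{[n]}. Then for every ā ∈ DK(A)_n, d(π_n(ā)) = Σ_{j=0}^{n} (−1)^j π_{n−1}(d_j(ā)), where d is the differential of A_• and d_j are the face maps of DK(A). -/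

import Mathlib

/-!
STATEMENT 8: for a connective chain complex `A` in an abelian category, with
`DK(A)_n = ⊕_{η : [n] ↠ [p]} A_p` the Dold–Kan simplicial object (structure maps via
epi-mono factorisation, with the summand map for `ρ = δ^p_p` equal to `(-1)^p ∂_p`,
the identity for `ρ = id`, and `0` otherwise) and `π_n` the projection onto the
summand indexed by `id_{[n]}`, one has `d(π_n ā) = ∑_{j=0}^n (-1)^j π_{n-1}(d_j ā)`.
-/

open CategoryTheory CategoryTheory.Limits

noncomputable section

universe v u

variable {C : Type u} [Category.{v} C] [Abelian C]

instance : CategoryTheory.Limits.HasFiniteBiproducts C :=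
  CategoryTheory.Limits.HasFiniteBiproducts.of_hasFiniteProducts

/-- The index set of the Dold–Kan direct sum in simplicial degree `n`:
surjective monotone maps `η : [n] ↠ [p]`. -/
def SurjIdx (n : ℕ) : Type :=
  Σ p : Fin (n + 1), {θ : Fin (n + 1) →o Fin (p.val + 1) // Function.Surjective θ}

instance (n : ℕ) : Finite (SurjIdx n) := by
  have : ∀ p : Fin (n + 1),
      Finite {θ : Fin (n + 1) →o Fin (p.val + 1) // Function.Surjective θ} := by
    intro p
    have : Finite (Fin (n + 1) →o Fin (p.val + 1)) :=
      Finite.of_injective (fun θ => (θ : Fin (n + 1) → Fin (p.val + 1)))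
        (fun a b h => OrderHom.ext _ _ h)
    infer_instance
  exact Finite.instSigma

/-- The `n`-th term of the Dold–Kan simplicial object: `⊕_{η : [n] ↠ [p]} A_p`. -/
def DKobj (A : ChainComplex C ℕ) (n : ℕ) : C :=
  ⨁ (fun s : SurjIdx n => A.X s.1.val)

/-- The index of the identity surjection `[n] ↠ [n]`. -/
def idIdx (n : ℕ) : SurjIdx n :=
  ⟨⟨n, by omega⟩, ⟨OrderHom.id, fun b => ⟨b, rfl⟩⟩⟩

/-- The projection `π_n : DK(A)_n → A_n` onto the summand indexed by `id_{[n]}`. -/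
def DKπ (A : ChainComplex C ℕ) (n : ℕ) : DKobj A n ⟶ A.X n :=
  biproduct.π (fun s : SurjIdx n => A.X s.1.val) (idIdx n)

/-- The image of `η ∘ θ` in `[p]`. -/
def compImg {m n : ℕ} (θ : Fin (m + 1) →o Fin (n + 1)) (s : SurjIdx n) :
    Finset (Fin (s.1.val + 1)) := by
  classical
  exact Finset.image (fun i => s.2.1 (θ i)) Finset.univ

lemma compImg_card_pos {m n : ℕ} (θ : Fin (m + 1) →o Fin (n + 1)) (s : SurjIdx n) :
    0 < (compImg θ s).card := by
  classical
  exact Finset.card_pos.mpr ⟨_, Finset.mem_image_of_mem _ (Finset.mem_univ 0)⟩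

lemma compImg_card_le {m n : ℕ} (θ : Fin (m + 1) →o Fin (n + 1)) (s : SurjIdx n) :
    (compImg θ s).card ≤ m + 1 := by
  classical
  calc (compImg θ s).card ≤ (Finset.univ : Finset (Fin (m + 1))).card :=
        Finset.card_image_le
    _ = m + 1 := by simp

/-- The epi part `ε : [m] ↠ [q]` of the epi-mono factorisation of `η ∘ θ`. -/
def factorIdx {m n : ℕ} (θ : Fin (m + 1) →o Fin (n + 1)) (s : SurjIdx n) : SurjIdx m := by
  classical
  have hcard : (compImg θ s).card = ((compImg θ s).card - 1) + 1 := by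
    have := compImg_card_pos θ s
    omega
  refine ⟨⟨(compImg θ s).card - 1, by have := compImg_card_le θ s; omega⟩,
    ⟨⟨fun i => ((compImg θ s).orderIsoOfFin hcard).symm
        ⟨s.2.1 (θ i), Finset.mem_image_of_mem _ (Finset.mem_univ i)⟩, ?_⟩, ?_⟩⟩
  · intro a b hab
    exact (((compImg θ s).orderIsoOfFin hcard).symm).monotone
      (Subtype.mk_le_mk.mpr (s.2.1.monotone (θ.monotone hab)))
  · intro b
    obtain ⟨i, -, hi⟩ := Finset.mem_image.mp ((compImg θ s).orderIsoOfFin hcard b).2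
    refine ⟨i, ?_⟩
    show ((compImg θ s).orderIsoOfFin hcard).symm _ = b
    have : (⟨s.2.1 (θ i), Finset.mem_image_of_mem _ (Finset.mem_univ i)⟩ :
        {x // x ∈ compImg θ s}) = (compImg θ s).orderIsoOfFin hcard b :=
      Subtype.ext hi
    rw [this, OrderIso.symm_apply_apply]

/-- The coefficient morphism attached to the epi-mono factorisation
`η ∘ θ = ρ ∘ ε`: the identity if `ρ = id`, `(-1)^p ∂_p` if `ρ = δ^p_p`, and `0`
otherwise. -/
def mapCoeff (A : ChainComplex C ℕ) {m n : ℕ} (θ : Fin (m + 1) →o Fin (n + 1))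
    (s : SurjIdx n) : A.X s.1.val ⟶ A.X ((factorIdx θ s).1.val) := by
  classical
  exact if hq : (factorIdx θ s).1.val = s.1.val then eqToHom (congrArg A.X hq.symm)
  else if _h : ((factorIdx θ s).1.val + 1 = s.1.val
      ∧ (Fin.last s.1.val) ∉ compImg θ s) then
    ((-1 : ℤ) ^ (s.1.val : ℕ)) • A.d s.1.val ((factorIdx θ s).1.val)
  else 0

/-- The Dold–Kan structure map attached to a monotone map `θ : [m] → [n]`. -/
def DKmap (A : ChainComplex C ℕ) {m n : ℕ} (θ : Fin (m + 1) →o Fin (n + 1)) :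
    DKobj A n ⟶ DKobj A m := by
  classical
  exact biproduct.matrix (fun s t =>
    if h : t = factorIdx θ s then
      mapCoeff A θ s ≫ eqToHom (congrArg (fun u : SurjIdx m => A.X u.1.val) h.symm)
    else 0)

/-- The `j`-th coface `δ_j : [n] → [n+1]` as a monotone map. -/
def δOH (n : ℕ) (j : Fin (n + 2)) : Fin (n + 1) →o Fin (n + 2) :=
  ⟨j.succAbove, (Fin.strictMono_succAbove j).monotone⟩


-- auxiliary lemmas --------------------------------------------------------

lemma fin_strictMono_id {m : ℕ} (f : Fin m → Fin m) (hf : StrictMono f) : ∀ i, f i = i := by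
  have h1 : f = ⇑((Finset.univ : Finset (Fin m)).orderEmbOfFin (by simp)) :=
    Finset.orderEmbOfFin_unique _ (fun x => Finset.mem_univ _) hf
  have h2 : (id : Fin m → Fin m) = ⇑((Finset.univ : Finset (Fin m)).orderEmbOfFin (by simp)) :=
    Finset.orderEmbOfFin_unique _ (fun x => Finset.mem_univ _) strictMono_id
  intro i
  rw [h1, ← h2]; rfl

lemma fin_mono_surj_id {m : ℕ} (f : Fin (m+1) →o Fin (m+1)) (hf : Function.Surjective f) :
    ∀ i, f i = i := by
  have hinj : Function.Injective f := Finite.injective_iff_surjective.mpr hf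
  exact fin_strictMono_id f (f.monotone.strictMono_of_injective hinj)

lemma factorIdx_eq {m n : ℕ} (θ : Fin (m+1) →o Fin (n+1)) (s : SurjIdx n)
    (q : ℕ) (hq : q < m + 1) (ε : Fin (m+1) →o Fin (q+1)) (hε : Function.Surjective ε)
    (ρ : Fin (q+1) → Fin (s.1.val+1)) (hρ : StrictMono ρ)
    (hcomp : ∀ i, ρ (ε i) = s.2.1 (θ i)) :
    factorIdx θ s = ⟨⟨q, hq⟩, ⟨ε, hε⟩⟩ := by
  classical
  have himg : compImg θ s = Finset.image ρ Finset.univ := by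
    ext x
    simp only [compImg, Finset.mem_image, Finset.mem_univ, true_and]
    constructor
    · rintro ⟨i, rfl⟩; exact ⟨ε i, hcomp i⟩
    · rintro ⟨y, rfl⟩; obtain ⟨i, rfl⟩ := hε y; exact ⟨i, (hcomp i).symm⟩
  have hcard : (compImg θ s).card = q + 1 := by
    rw [himg, Finset.card_image_of_injective _ hρ.injective, Finset.card_univ, Fintype.card_fin]
  have hmem : ∀ x, ρ x ∈ compImg θ s := by
    intro x; rw [himg]; exact Finset.mem_image_of_mem _ (Finset.mem_univ x)
  have hρeq : ρ = ⇑((compImg θ s).orderEmbOfFin hcard) :=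
    Finset.orderEmbOfFin_unique hcard hmem hρ
  have hqq : q = (compImg θ s).card - 1 := by omega
  subst hqq
  unfold factorIdx
  have hfun : ∀ i, ((compImg θ s).orderIsoOfFin (by omega)).symm
      ⟨s.2.1 (θ i), Finset.mem_image_of_mem _ (Finset.mem_univ i)⟩ = ε i := by
    intro i
    have h3 : ((compImg θ s).orderIsoOfFin (by omega)) (ε i)
        = ⟨s.2.1 (θ i), Finset.mem_image_of_mem _ (Finset.mem_univ i)⟩ := by
      apply Subtype.ext
      rw [Finset.coe_orderIsoOfFin_apply]
      show ((compImg θ s).orderEmbOfFin hcard) (ε i) = _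
      rw [← hρeq]; exact hcomp i
    rw [← h3, OrderIso.symm_apply_apply]
  exact congrArg (fun g => (⟨_, g⟩ : SurjIdx m))
    (Subtype.ext (OrderHom.ext _ _ (funext hfun)))


namespace DKAux

variable {n : ℕ}

/-- ℕ-valued clamped version of a monotone map `Fin (n+2) → Fin (n+1)`. -/
def E (η : Fin (n+2) →o Fin (n+1)) : ℕ → ℕ :=
  fun t => (η ⟨min t (n+1), by omega⟩ : ℕ)

lemma Ecoe' (η : Fin (n+2) →o Fin (n+1)) (x : Fin (n+2)) : (η x : ℕ) = E η x := by
  unfold E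
  have : (⟨min (x : ℕ) (n+1), by omega⟩ : Fin (n+2)) = x :=
    Fin.ext (by have := x.isLt; simp; omega)
  rw [this]

lemma Elt (η : Fin (n+2) →o Fin (n+1)) : ∀ t, E η t ≤ n := fun t => by
  have := (η ⟨min t (n+1), by omega⟩).isLt; unfold E; omega

lemma Emono (η : Fin (n+2) →o Fin (n+1)) : Monotone (E η) := by
  intro a b h
  exact η.monotone (by simp [Fin.le_def]; omega)

lemma Estep (η : Fin (n+2) →o Fin (n+1)) (hη : Function.Surjective η) :
    ∀ t, t ≤ n → E η (t+1) ≤ E η t + 1 := by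
  intro t ht
  by_contra h
  push_neg at h
  obtain ⟨x, hx⟩ := hη ⟨E η t + 1, by have := Elt η (t+1); omega⟩
  have hEx : E η (x : ℕ) = E η t + 1 := by
    rw [← Ecoe' η x, hx]
  rcases le_or_gt (x : ℕ) t with h1 | h1
  · have := Emono η h1; omega
  · have := Emono η (show t + 1 ≤ (x : ℕ) from h1); omega

lemma E0 (η : Fin (n+2) →o Fin (n+1)) (hη : Function.Surjective η) : E η 0 = 0 := by
  obtain ⟨x, hx⟩ := hη 0
  have hEx : E η (x : ℕ) = 0 := by rw [← Ecoe' η x, hx]; rfl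
  have := Emono η (Nat.zero_le (x : ℕ))
  omega

lemma Etop (η : Fin (n+2) →o Fin (n+1)) (hη : Function.Surjective η) : E η (n+1) = n := by
  obtain ⟨x, hx⟩ := hη (Fin.last n)
  have hEx : E η (x : ℕ) = n := by rw [← Ecoe' η x, hx]; rfl
  have h1 := Emono η (show (x:ℕ) ≤ n+1 by have := x.isLt; omega)
  have := Elt η (n+1)
  omega

lemma Elin (η : Fin (n+2) →o Fin (n+1)) (hη : Function.Surjective η) :
    ∀ a b, a ≤ b → b ≤ n + 1 → E η b ≤ E η a + (b - a) := by
  intro a b hab hb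
  induction b with
  | zero => interval_cases a; simp
  | succ b ih =>
    rcases Nat.lt_or_ge a (b+1) with h | h
    · have h1 := ih (by omega) (by omega)
      have h2 := Estep η hη b (by omega)
      omega
    · have : a = b + 1 := by omega
      subst this; simp

lemma flat_spec (η : Fin (n+2) →o Fin (n+1)) (hη : Function.Surjective η) :
    ∃ i : Fin (n+1), E η i = E η (i+1) ∧
      ∀ t, t ≤ n → t ≠ (i : ℕ) → E η t < E η (t+1) := by
  -- existence
  have hex : ∃ t, t ≤ n ∧ E η t = E η (t+1) := by
    by_contra h
    push_neg at h
    have hstrict : ∀ b, b ≤ n + 1 → b ≤ E η b := by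
      intro b hb
      induction b with
      | zero => omega
      | succ b ih =>
        have h1 := ih (by omega)
        have h2 := h b (by omega)
        have h3 := Emono η (show b ≤ b + 1 by omega)
        omega
    have := hstrict (n+1) (le_refl _)
    have := Etop η hη
    omega
  obtain ⟨t, ht, hflat⟩ := hex
  -- uniqueness: no two distinct flats
  have huniq : ∀ u v, u < v → v ≤ n → E η u = E η (u+1) → E η v = E η (v+1) → False := by
    intro u v huv hv hu' hv'
    have h1 : E η u ≤ u := by
      have := Elin η hη 0 u (by omega) (by omega)
      have := E0 η hη
      omega
    have h2 := Elin η hη (u+1) v (by omega) (by omega)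
    have h3 := Elin η hη (v+1) (n+1) (by omega) (by omega)
    have h4 := Etop η hη
    omega
  refine ⟨⟨t, by omega⟩, hflat, ?_⟩
  intro u hu hne
  have hne' : u ≠ t := hne
  have hle := Emono η (show u ≤ u + 1 by omega)
  rcases Nat.lt_or_ge (E η u) (E η (u+1)) with h' | h'
  · exact h'
  · exfalso
    have heq : E η u = E η (u+1) := by omega
    rcases Nat.lt_or_ge u t with h | h
    · exact huniq u t h (by omega) heq hflat
    · exact huniq t u (by omega) hu hflat heq


lemma succAbove_val (j : Fin (n+2)) (a : Fin (n+1)) :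
    (j.succAbove a : ℕ) = if (a:ℕ) < (j:ℕ) then (a:ℕ) else (a:ℕ)+1 := by
  rw [Fin.succAbove]
  by_cases h : (a:ℕ) < (j:ℕ)
  · rw [if_pos (by rwa [Fin.lt_def, Fin.coe_castSucc]), if_pos h, Fin.coe_castSucc]
  · rw [if_neg (by rwa [Fin.lt_def, Fin.coe_castSucc]), if_neg h, Fin.val_succ]

lemma eta_castSucc_succ (η : Fin (n+2) →o Fin (n+1)) (i : Fin (n+1)) :
    ((η i.castSucc : ℕ) = E η i) ∧ ((η i.succ : ℕ) = E η ((i:ℕ)+1)) := by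
  constructor
  · rw [Ecoe']; norm_num
  · rw [Ecoe']; norm_num

lemma inj_iff (η : Fin (n+2) →o Fin (n+1)) (i : Fin (n+1))
    (hflat : E η i = E η (i+1))
    (hstrict : ∀ t, t ≤ n → t ≠ (i:ℕ) → E η t < E η (t+1)) (j : Fin (n+2)) :
    Function.Injective (fun a : Fin (n+1) => η (j.succAbove a))
      ↔ (j = i.castSucc ∨ j = i.succ) := by
  constructor
  · intro hinj
    by_contra hor
    push_neg at hor
    obtain ⟨h1, h2⟩ := hor
    obtain ⟨a, ha⟩ := Fin.exists_succAbove_eq_iff.mpr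
      (show i.castSucc ≠ j from fun h => h1 h.symm)
    obtain ⟨b, hb⟩ := Fin.exists_succAbove_eq_iff.mpr
      (show i.succ ≠ j from fun h => h2 h.symm)
    have hab : a ≠ b := by
      intro h
      rw [h, hb] at ha
      have := congrArg Fin.val ha
      simp at this
    apply hab
    apply hinj
    show η (j.succAbove a) = η (j.succAbove b)
    rw [ha, hb]
    apply Fin.ext
    rw [(eta_castSucc_succ η i).1, (eta_castSucc_succ η i).2]
    exact hflat
  · intro h
    apply StrictMono.injective
    rw [Fin.strictMono_iff_lt_succ]
    intro k
    have hk : (k : ℕ) < n := k.isLt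
    rw [Fin.lt_def, Ecoe', Ecoe', succAbove_val, succAbove_val,
      Fin.coe_castSucc, Fin.val_succ]
    have hiv : (i : ℕ) ≤ n := by omega
    rcases h with rfl | rfl
    · rw [Fin.coe_castSucc]
      split_ifs with h1 h2 h2
      · exact hstrict k (by omega) (by omega)
      · have s1 := hstrict k (by omega) (by omega)
        have s2 : E η ((k:ℕ)+1) = E η ((k:ℕ)+1+1) := by
          have : (i : ℕ) = (k:ℕ)+1 := by omega
          rw [this] at hflat; exact hflat
        omega
      · omega
      · exact hstrict ((k:ℕ)+1) (by omega) (by omega)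
    · rw [Fin.val_succ]
      split_ifs with h1 h2 h2
      · exact hstrict k (by omega) (by omega)
      · have hc : (k:ℕ) = (i:ℕ) := by omega
        calc E η (k:ℕ) = E η ((k:ℕ)+1) := by rw [hc]; exact hflat
          _ < E η ((k:ℕ)+1+1) := hstrict ((k:ℕ)+1) (by omega) (by omega)
      · omega
      · exact hstrict ((k:ℕ)+1) (by omega) (by omega)

end DKAux

-- more helpers about the DK construction -----------------------------------

lemma idIdx_val (m : ℕ) : (((idIdx m).1 : Fin (m+1)) : ℕ) = m := rfl

lemma factorIdx_fst_val {m k : ℕ} (θ : Fin (m+1) →o Fin (k+1)) (s : SurjIdx k) :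
    (((factorIdx θ s).1 : Fin (m+1)) : ℕ) = (compImg θ s).card - 1 := rfl

lemma factorIdx_le {m k : ℕ} (θ : Fin (m+1) →o Fin (k+1)) (s : SurjIdx k) :
    (((factorIdx θ s).1 : Fin (m+1)) : ℕ) ≤ ((s.1 : Fin (k+1)) : ℕ) := by
  classical
  have h1 : (compImg θ s).card ≤ ((s.1 : Fin (k+1)) : ℕ) + 1 := by
    have := Finset.card_le_univ (compImg θ s)
    simpa using this
  rw [factorIdx_fst_val]
  omega

lemma d_comp_eqToHom (A : ChainComplex C ℕ) {a b c : ℕ} (hb : b = c) :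
    A.d a b ≫ eqToHom (congrArg A.X hb) = A.d a c := by
  subst hb; simp

lemma entry_pos (A : ChainComplex C ℕ) {m k : ℕ} (θ : Fin (m+1) →o Fin (k+1))
    (s : SurjIdx k) (h : factorIdx θ s = idIdx m) :
    biproduct.ι (fun t : SurjIdx k => A.X t.1.val) s ≫ DKmap A θ ≫ DKπ A m
      = mapCoeff A θ s ≫ eqToHom
          (show A.X ((factorIdx θ s).1.val) = A.X m from
            congrArg (fun u : SurjIdx m => A.X u.1.val) h) := by
  classical
  rw [DKmap, DKπ]
  erw [← Category.assoc, biproduct.ι_matrix, biproduct.lift_π]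
  rw [dif_pos h.symm]
  rfl

lemma entry_neg (A : ChainComplex C ℕ) {m k : ℕ} (θ : Fin (m+1) →o Fin (k+1))
    (s : SurjIdx k) (h : factorIdx θ s ≠ idIdx m) :
    biproduct.ι (fun t : SurjIdx k => A.X t.1.val) s ≫ DKmap A θ ≫ DKπ A m = 0 := by
  classical
  rw [DKmap, DKπ]
  erw [← Category.assoc, biproduct.ι_matrix, biproduct.lift_π]
  exact dif_neg (fun hh => h hh.symm)

/-- **Statement 8.**  For every connective chain complex `A` in an abelian category
and every `n`, the differential of the top Dold–Kan component satisfies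
`d ∘ π_{n+1} = ∑_{j=0}^{n+1} (-1)^j π_n ∘ (d_j)`, where `d_j = DK(δ_j)` are the face
maps of the Dold–Kan simplicial object `DK(A)`. -/
theorem dk_top_component_boundary (A : ChainComplex C ℕ) (n : ℕ) :
    DKπ A (n + 1) ≫ A.d (n + 1) n
      = ∑ j : Fin (n + 2),
          ((-1 : ℤ) ^ (j : ℕ)) • (DKmap A (δOH n j) ≫ DKπ A n) := by
  classical
  refine biproduct.hom_ext' _ _ fun s => ?_
  erw [Preadditive.comp_sum]
  erw [Finset.sum_congr rfl fun j _ => Preadditive.comp_zsmul _ _ _]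
  by_cases hs : s = idIdx (n + 1)
  · subst hs
    erw [← Category.assoc, DKπ, biproduct.ι_π_self, Category.id_comp]
    have hfac : ∀ j : Fin (n+2), factorIdx (δOH n j) (idIdx (n+1)) = idIdx n := by
      intro j
      exact factorIdx_eq (δOH n j) (idIdx (n+1)) n (by omega) OrderHom.id
        Function.surjective_id j.succAbove (Fin.strictMono_succAbove j) (fun a => rfl)
    have hmem : ∀ j : Fin (n+2),
        Fin.last (n+1) ∈ compImg (δOH n j) (idIdx (n+1)) ↔ Fin.last (n+1) ≠ j := by
      intro j
      simp only [compImg, Finset.mem_image, Finset.mem_univ, true_and]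
      refine Finset.mem_image.trans ?_
      show (∃ a, a ∈ Finset.univ ∧ j.succAbove a = Fin.last (n+1)) ↔ _
      simp only [Finset.mem_univ, true_and]
      exact Fin.exists_succAbove_eq_iff
    have hentry : ∀ j : Fin (n+2),
        biproduct.ι (fun t : SurjIdx (n+1) => A.X t.1.val) (idIdx (n+1))
            ≫ DKmap A (δOH n j) ≫ DKπ A n
          = if j = Fin.last (n+1) then ((-1:ℤ)^(n+1)) • A.d (n+1) n else 0 := by
      intro j
      rw [entry_pos A (δOH n j) (idIdx (n+1)) (hfac j)]
      simp only [mapCoeff]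
      rw [dif_neg (show ¬(((factorIdx (δOH n j) (idIdx (n+1))).1 : ℕ)
          = ((idIdx (n+1)).1 : ℕ)) by rw [hfac j]; simp [idIdx])]
      by_cases hj : j = Fin.last (n+1)
      · rw [if_pos hj]
        rw [dif_pos ⟨show ((factorIdx (δOH n j) (idIdx (n+1))).1 : ℕ) + 1
              = ((idIdx (n+1)).1 : ℕ) by rw [hfac j]; rfl,
            show ¬(Fin.last (n+1) ∈ compImg (δOH n j) (idIdx (n+1))) by
              rw [hmem j, hj]; simp⟩]
        rw [Preadditive.zsmul_comp,
          d_comp_eqToHom A (show ((factorIdx (δOH n j) (idIdx (n+1))).1 : ℕ) = n by rw [hfac j]; rfl)]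
        rfl
      · rw [if_neg hj]
        rw [dif_neg (by
          rintro ⟨-, hm⟩
          exact hm ((hmem j).mpr (fun h => hj h.symm)))]
        rw [zero_comp]
        rfl
    erw [Finset.sum_congr rfl fun (j : Fin (n+2)) _ => congrArg (fun x => ((-1:ℤ)^(j:ℕ)) • x) (hentry j)]
    show A.d (n+1) n = ∑ j : Fin (n+2),
      ((-1:ℤ)^(j:ℕ)) • (if j = Fin.last (n+1) then ((-1:ℤ)^(n+1)) • A.d (n+1) n else 0)
    simp only [hentry, smul_ite, smul_zero]
    rw [Finset.sum_ite_eq' Finset.univ (Fin.last (n+1))]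
    simp only [Finset.mem_univ, if_true]
    rw [Fin.val_last, smul_smul, ← pow_add,
      Even.neg_one_pow ⟨n+1, by ring⟩, one_smul]
  · erw [← Category.assoc, DKπ, biproduct.ι_π, dif_neg hs, zero_comp]
    obtain ⟨⟨p, hp⟩, η, hηs⟩ := s
    rcases Nat.lt_or_ge p (n+1) with hplt | hpge
    · rcases Nat.lt_or_ge p n with hpn | hpn
      · -- p < n : every entry vanishes
        symm
        apply Finset.sum_eq_zero
        intro j _
        erw [entry_neg, smul_zero]
        intro h
        have h1 := factorIdx_le (δOH n j) ⟨⟨p, hp⟩, η, hηs⟩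
        rw [h] at h1
        have h1' : n ≤ p := h1
        omega
      · -- p = n : the interesting cancellation
        have hpn' : n = p := by omega
        subst hpn'
        obtain ⟨i, hflat, hstrict⟩ := DKAux.flat_spec η hηs
        have hentry : ∀ j : Fin (n+2),
            biproduct.ι (fun t : SurjIdx (n+1) => A.X t.1.val) ⟨⟨n, hp⟩, η, hηs⟩
                ≫ DKmap A (δOH n j) ≫ DKπ A n
              = if (j = i.castSucc ∨ j = i.succ) then 𝟙 (A.X n) else 0 := by
          intro j
          by_cases hj : (j = i.castSucc ∨ j = i.succ)
          · rw [if_pos hj]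
            have hinj : Function.Injective (fun a : Fin (n+1) => η (j.succAbove a)) :=
              (DKAux.inj_iff η i hflat hstrict j).mpr hj
            have hsm : StrictMono (fun a : Fin (n+1) => η (j.succAbove a)) :=
              Monotone.strictMono_of_injective
                (η.monotone.comp (Fin.strictMono_succAbove j).monotone) hinj
            have hfac : factorIdx (δOH n j) ⟨⟨n, hp⟩, η, hηs⟩ = idIdx n :=
              factorIdx_eq (δOH n j) _ n (by omega) OrderHom.id Function.surjective_id
                (fun a => η (j.succAbove a)) hsm (fun a => rfl)
            rw [entry_pos A (δOH n j) _ hfac]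
            simp only [mapCoeff]
            rw [dif_pos (show ((factorIdx (δOH n j) ⟨⟨n, hp⟩, η, hηs⟩).1 : ℕ)
                = ((⟨⟨n, hp⟩, η, hηs⟩ : SurjIdx (n+1)).1 : ℕ) by rw [hfac]; rfl)]
            rw [eqToHom_trans]
            exact eqToHom_refl _ _
          · rw [if_neg hj]
            apply entry_neg
            intro hfaceq
            have hval : (compImg (δOH n j) ⟨⟨n, hp⟩, η, hηs⟩).card - 1 = n := by
              have h0 := congrArg (fun u : SurjIdx n => (u.1 : ℕ)) hfaceq
              exact h0
            have hposc := compImg_card_pos (δOH n j) ⟨⟨n, hp⟩, η, hηs⟩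
            have hcard : (compImg (δOH n j) ⟨⟨n, hp⟩, η, hηs⟩).card = n+1 := by omega
            have huniv : compImg (δOH n j) ⟨⟨n, hp⟩, η, hηs⟩ = Finset.univ := by
              apply Finset.eq_univ_of_card
              rw [hcard]; simp
            have hsurj : Function.Surjective (fun a : Fin (n+1) => η (j.succAbove a)) := by
              intro x
              have hx : x ∈ compImg (δOH n j) ⟨⟨n, hp⟩, η, hηs⟩ := by
                rw [huniv]; exact Finset.mem_univ x
              simp only [compImg, Finset.mem_image, Finset.mem_univ, true_and] at hx
              exact hx
            exact hj ((DKAux.inj_iff η i hflat hstrict j).mp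
              (Finite.injective_iff_surjective.mpr hsurj))
        symm
        erw [Finset.sum_congr rfl fun (j : Fin (n+2)) _ => congrArg (fun x => ((-1:ℤ)^(j:ℕ)) • x) (hentry j)]
        simp only [hentry, smul_ite, smul_zero]
        have hrw : ∀ j : Fin (n+2), (j = i.castSucc ∨ j = i.succ)
            ↔ j ∈ ({i.castSucc, i.succ} : Finset (Fin (n+2))) := by
          intro j; simp
        erw [Finset.sum_congr rfl fun j _ => if_congr (hrw j) rfl rfl]
        rw [Finset.sum_ite_mem, Finset.univ_inter,
          Finset.sum_pair (show i.castSucc ≠ i.succ from (Fin.castSucc_lt_succ : i.castSucc < i.succ).ne)]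
        rw [Fin.coe_castSucc, Fin.val_succ, pow_succ, ← add_smul]
        rw [show ((-1:ℤ)^(i:ℕ) + (-1:ℤ)^(i:ℕ) * -1) = 0 by ring, zero_smul]
    · -- p = n+1 : forces s = idIdx, contradiction
      exfalso
      have hp' : p = n + 1 := by omega
      subst hp'
      apply hs
      have hid : η = OrderHom.id :=
        OrderHom.ext _ _ (funext (fin_mono_surj_id η hηs))
      subst hid
      rfl

end
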